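/- For ρ > 1, the function F_ρ(s) := -(s - s/(ρ·k_ρ(s))) is strictly decreasing on the open interval (0,1). -/

import Mathlib

set_option maxHeartbeats 1000000 in
theorem F_rho_strictAnti (ρ : ℝ) (hρ : 1 < ρ) :
    StrictAntiOn
      (fun s : ℝ => -(s - s / (ρ * (ρ/2 * (1 - s^2) + Real.sqrt (ρ^2/4 * (1 - s^2)^2 + s^2)))))
      (Set.Ioo (0:ℝ) 1) := by
  have hρ0 : (0:ℝ) < ρ := lt_trans one_pos hρ
  have hK : ∀ s : ℝ, s ∈ Set.Ioo (0:ℝ) 1 →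
      0 < ρ/2 * (1 - s^2) + Real.sqrt (ρ^2/4 * (1 - s^2)^2 + s^2) := by
    intro s hs
    have hs2 : s^2 < 1 := by nlinarith [hs.1, hs.2]
    have h1 : 0 < ρ/2 * (1 - s^2) := mul_pos (by linarith) (by linarith)
    have h2 : 0 ≤ Real.sqrt (ρ^2/4 * (1 - s^2)^2 + s^2) := Real.sqrt_nonneg _
    linarith
  have hsq : ∀ s : ℝ, (Real.sqrt (ρ^2/4 * (1 - s^2)^2 + s^2))^2 = ρ^2/4 * (1 - s^2)^2 + s^2 := by
    intro s; exact Real.sq_sqrt (by positivity)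
  have hval : ∀ s : ℝ, s ∈ Set.Ioo (0:ℝ) 1 →
      s - s / (ρ * (ρ/2 * (1 - s^2) + Real.sqrt (ρ^2/4 * (1 - s^2)^2 + s^2)))
      = (ρ^2 - 1) * s /
        (ρ * ((ρ/2 * (1 - s^2) + Real.sqrt (ρ^2/4 * (1 - s^2)^2 + s^2)) + ρ * s^2)) := by
    intro s hs
    have key : ∀ K : ℝ, 0 < K → K^2 = ρ * (1 - s^2) * K + s^2 →
        s - s / (ρ * K) = (ρ^2 - 1) * s / (ρ * (K + ρ * s^2)) := by
      intro K hKpos hKsq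
      have hden : 0 < K + ρ * s^2 := by positivity
      field_simp
      ring_nf
      linear_combination (s * ρ) * hKsq
    apply key _ (hK s hs)
    have h := hsq s
    nlinarith [h]
  intro a ha b hb hab
  have ha0 := ha.1; have ha1 := ha.2
  have hb0 := hb.1; have hb1 := hb.2
  simp only
  rw [hval a ha, hval b hb]
  apply neg_lt_neg
  set Ka := ρ/2 * (1 - a^2) + Real.sqrt (ρ^2/4 * (1 - a^2)^2 + a^2) with hKa
  set Kb := ρ/2 * (1 - b^2) + Real.sqrt (ρ^2/4 * (1 - b^2)^2 + b^2) with hKb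
  have hKapos : 0 < Ka := hK a ha
  have hKbpos : 0 < Kb := hK b hb
  have hSa : Ka - ρ/2 * (1 - a^2) = Real.sqrt (ρ^2/4 * (1 - a^2)^2 + a^2) := by
    rw [hKa]; ring
  have hSb : Kb - ρ/2 * (1 - b^2) = Real.sqrt (ρ^2/4 * (1 - b^2)^2 + b^2) := by
    rw [hKb]; ring
  clear_value Ka Kb
  rw [div_lt_div_iff₀ (by positivity) (by positivity)]
  have hmain : a * Kb + ρ * a * b^2 < b * Ka + ρ * a^2 * b := by
    have hS : a * Real.sqrt (ρ^2/4 * (1 - b^2)^2 + b^2)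
        ≤ b * Real.sqrt (ρ^2/4 * (1 - a^2)^2 + a^2) := by
      have h1 : a * Real.sqrt (ρ^2/4 * (1 - b^2)^2 + b^2)
          = Real.sqrt (a^2 * (ρ^2/4 * (1 - b^2)^2 + b^2)) := by
        rw [Real.sqrt_mul (sq_nonneg a), Real.sqrt_sq ha0.le]
      have h2 : b * Real.sqrt (ρ^2/4 * (1 - a^2)^2 + a^2)
          = Real.sqrt (b^2 * (ρ^2/4 * (1 - a^2)^2 + a^2)) := by
        rw [Real.sqrt_mul (sq_nonneg b), Real.sqrt_sq hb0.le]
      rw [h1, h2]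
      apply Real.sqrt_le_sqrt
      -- a² (ρ²/4 (1-b²)² + b²) ≤ b² (ρ²/4 (1-a²)² + a²), i.e. Q² ≤ P²
      have hab1 : (0:ℝ) ≤ 1 + a * b := by positivity
      have hQP : ρ * a * (1 - b^2) / 2 ≤ ρ * b * (1 - a^2) / 2 := by
        nlinarith [mul_nonneg (mul_nonneg hρ0.le (sub_nonneg.2 hab.le)) hab1]
      have hb2 : (0:ℝ) ≤ 1 - b^2 := by nlinarith
      have hQ0 : 0 ≤ ρ * a * (1 - b^2) / 2 :=
        div_nonneg (mul_nonneg (mul_nonneg hρ0.le ha0.le) hb2) (by norm_num)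
      have hsqle : (ρ * a * (1 - b^2) / 2)^2 ≤ (ρ * b * (1 - a^2) / 2)^2 := by
        exact pow_le_pow_left₀ hQ0 hQP 2
      nlinarith [hsqle]
    have hfac : 0 < ρ * (b - a) * (1 - a * b) := by
      apply mul_pos (mul_pos hρ0 (by linarith)) (by nlinarith)
    have hpoly : a * (ρ/2 * (1 - b^2)) + ρ * a * b^2 < b * (ρ/2 * (1 - a^2)) + ρ * a^2 * b := by
      linarith [hfac]
    rw [← hSa, ← hSb] at hS
    linarith [hS, hpoly]
  have hc : 0 < ρ * (ρ^2 - 1) := by nlinarith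
  calc (ρ^2 - 1) * a * (ρ * (Kb + ρ * b^2))
      = ρ * (ρ^2 - 1) * (a * Kb + ρ * a * b^2) := by ring
    _ < ρ * (ρ^2 - 1) * (b * Ka + ρ * a^2 * b) := mul_lt_mul_of_pos_left hmain hc
    _ = (ρ^2 - 1) * b * (ρ * (Ka + ρ * a^2)) := by ring
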